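/- arXiv:1502.05939 — 4 statements merged into one kernel-verified Lean document; each statement's English description precedes it below -/
import Mathlib

section
/- There exists an absolute constant C > 0 such that the following holds. Let m be a positive real, 0 < p < 1, q = 1 - p, and let β be a random variable with P{β = 0} = p and P{β = m} = q, with characteristic function φ(t) = E e^{2πitβ}. Then for every real t with q·|sin(πtm)| ≤ 1/3, one has φ(t) = exp(2iπqmt − 2π²pqm²t² + B(t)) for some complex number B(t) with |B(t)| ≤ C·q·m³·|t|³. -/
open MeasureTheory Complex

lemma norm_exp_mul_I_sub_one_le (y : ℝ) : ‖Complex.exp ((y : ℂ) * I) - 1‖ ≤ |y| := by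
  have h1 : Complex.exp ((y : ℂ) * I) - 1
      = ((Real.cos y - 1 : ℝ) : ℂ) + ((Real.sin y : ℝ) : ℂ) * I := by
    rw [Complex.exp_mul_I]; push_cast; ring
  rw [h1, Complex.norm_add_mul_I]
  have hc : Real.cos y = 1 - 2 * Real.sin (y/2) ^ 2 := by
    have h2 := Real.cos_two_mul' (y/2)
    have h3 := Real.sin_sq_add_cos_sq (y/2)
    rw [show 2 * (y/2) = y by ring] at h2
    nlinarith
  have hs : Real.sin (y/2) ^ 2 ≤ (y/2) ^ 2 := Real.sin_sq_le_sq
  have hbound : (Real.cos y - 1) ^ 2 + Real.sin y ^ 2 ≤ y ^ 2 := by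
    have h3 := Real.sin_sq_add_cos_sq y
    nlinarith
  calc Real.sqrt ((Real.cos y - 1) ^ 2 + Real.sin y ^ 2) ≤ Real.sqrt (y ^ 2) :=
        Real.sqrt_le_sqrt hbound
    _ = |y| := by rw [Real.sqrt_sq_eq_abs]

lemma taylor3 (y : ℝ) (hy : |y| ≤ 1) :
    ‖Complex.exp ((y : ℂ) * I) - (1 + (y : ℂ) * I + ((y : ℂ) * I) ^ 2 / 2)‖ ≤ (2/9) * |y| ^ 3 := by
  have h := Complex.exp_bound (x := (y : ℂ) * I) (by simpa using hy) (n := 3) (by norm_num)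
  have hsum : (∑ m ∈ Finset.range 3, ((y : ℂ) * I) ^ m / m.factorial)
      = 1 + (y : ℂ) * I + ((y : ℂ) * I) ^ 2 / 2 := by
    norm_num [Finset.sum_range_succ, Nat.factorial]
  rw [hsum] at h
  have habs : ‖(y:ℂ) * I‖ = |y| := by simp
  calc ‖_‖ ≤ ‖(y:ℂ)*I‖ ^ 3 * ((4:ℝ) * ((6:ℝ) * 3)⁻¹) := by
        convert h using 3 <;> norm_num [Nat.factorial]
    _ = (2/9) * |y| ^ 3 := by rw [habs]; ring

set_option maxHeartbeats 2000000 in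
lemma key_expansion (p q θ : ℝ) (hp : 0 < p) (hp1 : p < 1) (hq : q = 1 - p)
    (hsin : q * |Real.sin (θ / 2)| ≤ 1 / 3) :
    ∃ B : ℂ, ((p : ℂ) + (q : ℂ) * Complex.exp ((θ : ℂ) * I) =
        Complex.exp (((q * θ : ℝ) : ℂ) * I - ((p * q * θ ^ 2 / 2 : ℝ) : ℂ) + B)) ∧
      ‖B‖ ≤ 25 * q * |θ| ^ 3 := by
  have hq0 : 0 < q := by rw [hq]; linarith
  have hq1 : q < 1 := by rw [hq]; linarith
  have hpq : p + q = 1 := by rw [hq]; ring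
  obtain ⟨φc, hφc⟩ : ∃ z : ℂ, (p : ℂ) + (q : ℂ) * Complex.exp ((θ : ℂ) * I) = z := ⟨_, rfl⟩
  rw [hφc]
  obtain ⟨g, hgdef⟩ : ∃ z : ℂ, Complex.exp (((-(q * θ) : ℝ) : ℂ) * I) * φc = z := ⟨_, rfl⟩
  -- norm of φc
  have hφ_eq : φc = (((p + q * Real.cos θ : ℝ)) : ℂ) + ((q * Real.sin θ : ℝ) : ℂ) * I := by
    rw [← hφc, Complex.exp_mul_I, ← Complex.ofReal_cos, ← Complex.ofReal_sin]
    push_cast; ring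
  have hφ_norm_sq : ‖φc‖ ^ 2 = (p + q * Real.cos θ) ^ 2 + (q * Real.sin θ) ^ 2 := by
    rw [hφ_eq, Complex.norm_add_mul_I, Real.sq_sqrt (by positivity)]
  have hcosθ : Real.cos θ = 1 - 2 * Real.sin (θ/2) ^ 2 := by
    have h2 := Real.cos_two_mul' (θ/2)
    have h3 := Real.sin_sq_add_cos_sq (θ/2)
    rw [show 2 * (θ/2) = θ by ring] at h2
    nlinarith
  have hφ_lb : 1/3 ≤ ‖φc‖ := by
    have hs1 : |Real.sin (θ/2)| ≤ 1 := Real.abs_sin_le_one _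
    have hkey : (1:ℝ)/9 ≤ ‖φc‖ ^ 2 := by
      rw [hφ_norm_sq]
      have h3 := Real.sin_sq_add_cos_sq θ
      have hsabs : Real.sin (θ/2) ^ 2 = |Real.sin (θ/2)| ^ 2 := (_root_.sq_abs _).symm
      have ha0 : (0:ℝ) ≤ |Real.sin (θ/2)| := abs_nonneg _
      obtain ⟨a, ha⟩ : ∃ a : ℝ, |Real.sin (θ/2)| = a := ⟨_, rfl⟩
      rw [ha] at hsabs hsin hs1 ha0
      have hc2 : Real.cos θ = 1 - 2 * a ^ 2 := by rw [hcosθ, hsabs]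
      have hs2 : Real.sin θ ^ 2 = 1 - (1 - 2 * a ^ 2) ^ 2 := by
        rw [hc2] at h3; linarith
      have hexp : (p + q * Real.cos θ) ^ 2 + (q * Real.sin θ) ^ 2 = 1 - 4 * p * q * a ^ 2 := by
        rw [hc2]
        linear_combination q^2 * hs2 + (p + q + 1) * hpq
      rw [hexp]
      rcases le_or_gt q (1/3) with hql | hql
      · have h1 : a ^ 2 ≤ 1 := by nlinarith
        nlinarith [mul_nonneg (mul_pos hp hq0).le (sub_nonneg.2 h1),
          mul_nonneg (sub_nonneg.2 hql) (show (0:ℝ) ≤ 2/3 - q by linarith)]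
      · have h9 : (q * a) ^ 2 ≤ 1/9 := by nlinarith [mul_nonneg hq0.le ha0]
        have h1 : q * (4 * p * q * a ^ 2) ≤ 4 * p * (1/9) := by
          nlinarith [mul_le_mul_of_nonneg_left h9 (by positivity : (0:ℝ) ≤ 4 * p)]
        have h2 : 4 * p * (1/9) ≤ q * (8/9) := by nlinarith
        have h4 : 4 * p * q * a ^ 2 ≤ 8/9 := by
          have := h1.trans h2
          exact le_of_mul_le_mul_left (by linarith) hq0
        linarith
    nlinarith [norm_nonneg φc]
  have hφ_ne : φc ≠ 0 := by
    intro h; rw [h, norm_zero] at hφ_lb; linarith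
  have hg_norm : ‖g‖ = ‖φc‖ := by
    rw [← hgdef, norm_mul, Complex.norm_exp_ofReal_mul_I, one_mul]
  have hg_ne : g ≠ 0 := by
    intro h
    rw [h, norm_zero] at hg_norm
    rw [← hg_norm] at hφ_lb; linarith
  refine ⟨Complex.log g + ((p * q * θ ^ 2 / 2 : ℝ) : ℂ), ?_, ?_⟩
  · have he : ((q * θ : ℝ) : ℂ) * I - ((p * q * θ ^ 2 / 2 : ℝ) : ℂ)
        + (Complex.log g + ((p * q * θ ^ 2 / 2 : ℝ) : ℂ))
        = ((q * θ : ℝ) : ℂ) * I + Complex.log g := by ring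
    rw [he, Complex.exp_add, Complex.exp_log hg_ne, ← hgdef, ← mul_assoc, ← Complex.exp_add]
    rw [show ((q * θ : ℝ) : ℂ) * I + ((-(q * θ) : ℝ) : ℂ) * I = 0 by push_cast; ring,
      Complex.exp_zero, one_mul]
  · -- the bound
    have hE12 : Complex.exp (((-(q * θ) : ℝ) : ℂ) * I) * Complex.exp ((θ:ℂ) * I)
        = Complex.exp (((p * θ : ℝ) : ℂ) * I) := by
      rw [← Complex.exp_add]; congr 1; push_cast [hq]; ring
    have hgexp : g = (p:ℂ) * Complex.exp (((-(q * θ) : ℝ) : ℂ) * I)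
        + (q:ℂ) * Complex.exp (((p * θ : ℝ) : ℂ) * I) := by
      rw [← hgdef, ← hφc]
      calc Complex.exp (((-(q * θ) : ℝ) : ℂ) * I) * ((p:ℂ) + (q:ℂ) * Complex.exp ((θ:ℂ) * I))
          = (p:ℂ) * Complex.exp (((-(q * θ) : ℝ) : ℂ) * I)
            + (q:ℂ) * (Complex.exp (((-(q * θ) : ℝ) : ℂ) * I) * Complex.exp ((θ:ℂ) * I)) := by
            ring
        _ = _ := by rw [hE12]
    have hpqC : (p:ℂ) + (q:ℂ) = 1 := by push_cast [hq]; ring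
    have hu_eq : g - 1 = (p:ℂ) * (Complex.exp (((-(q * θ) : ℝ) : ℂ) * I) - 1)
        + (q:ℂ) * (Complex.exp (((p * θ : ℝ) : ℂ) * I) - 1) := by
      rw [hgexp]; linear_combination hpqC
    have hnp : ‖(p:ℂ)‖ = p := by rw [Complex.norm_real, Real.norm_eq_abs, abs_of_pos hp]
    have hnq : ‖(q:ℂ)‖ = q := by rw [Complex.norm_real, Real.norm_eq_abs, abs_of_pos hq0]
    have hu_le : ‖g - 1‖ ≤ 2 * p * q * |θ| := by
      calc ‖g - 1‖ ≤ ‖(p:ℂ) * (Complex.exp (((-(q * θ) : ℝ) : ℂ) * I) - 1)‖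
            + ‖(q:ℂ) * (Complex.exp (((p * θ : ℝ) : ℂ) * I) - 1)‖ := by
            rw [hu_eq]; exact norm_add_le _ _
        _ ≤ p * |(-(q * θ))| + q * |p * θ| := by
            rw [norm_mul, norm_mul, hnp, hnq]
            gcongr
            · exact norm_exp_mul_I_sub_one_le _
            · exact norm_exp_mul_I_sub_one_le _
        _ = 2 * p * q * |θ| := by
            rw [abs_neg, abs_mul, abs_mul, abs_of_pos hq0, abs_of_pos hp]; ring
    have hθ0 : (0:ℝ) ≤ |θ| := abs_nonneg θ
    have hlog_small : ‖g - 1‖ ≤ 1/2 → ‖Complex.log g - (g - 1)‖ ≤ ‖g - 1‖ ^ 2 := by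
      intro h
      have h1 : ‖g - 1‖ < 1 := by linarith
      have := Complex.norm_log_one_add_sub_self_le (z := g - 1) h1
      rw [show (1:ℂ) + (g - 1) = g by ring] at this
      have h2 : (1 - ‖g - 1‖)⁻¹ ≤ 2 := by
        rw [inv_le_comm₀ (by linarith) (by norm_num)]
        linarith
      calc ‖Complex.log g - (g - 1)‖ ≤ ‖g - 1‖ ^ 2 * (1 - ‖g - 1‖)⁻¹ / 2 := this
        _ ≤ ‖g - 1‖ ^ 2 * 2 / 2 := by gcongr
        _ = ‖g - 1‖ ^ 2 := by ring
    rcases le_or_gt |θ| 1 with hθ1 | hθ1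
    · -- small θ
      have hT1 := taylor3 (-(q * θ)) (by rw [abs_neg, abs_mul, abs_of_pos hq0]; nlinarith)
      have hT2 := taylor3 (p * θ) (by rw [abs_mul, abs_of_pos hp]; nlinarith)
      have hRid : g - 1 + ((p * q * θ ^ 2 / 2 : ℝ) : ℂ)
          = (p:ℂ) * (Complex.exp (((-(q * θ) : ℝ) : ℂ) * I)
              - (1 + ((-(q * θ) : ℝ) : ℂ) * I + (((-(q * θ) : ℝ) : ℂ) * I) ^ 2 / 2))
          + (q:ℂ) * (Complex.exp (((p * θ : ℝ) : ℂ) * I)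
              - (1 + ((p * θ : ℝ) : ℂ) * I + (((p * θ : ℝ) : ℂ) * I) ^ 2 / 2)) := by
        rw [hu_eq]
        push_cast
        linear_combination (((p:ℂ) * q * θ ^ 2) / 2) * Complex.I_sq
          + (((p:ℂ) * q * θ ^ 2) / 2 * Complex.I ^ 2) * hpqC
      have hR_le : ‖g - 1 + ((p * q * θ ^ 2 / 2 : ℝ) : ℂ)‖ ≤ (2/9) * q * |θ| ^ 3 := by
        have habs1 : |(-(q * θ))| = q * |θ| := by rw [abs_neg, abs_mul, abs_of_pos hq0]
        have habs2 : |p * θ| = p * |θ| := by rw [abs_mul, abs_of_pos hp]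
        calc ‖g - 1 + ((p * q * θ ^ 2 / 2 : ℝ) : ℂ)‖
            ≤ p * ((2/9) * |(-(q * θ))| ^ 3) + q * ((2/9) * |p * θ| ^ 3) := by
              rw [hRid]
              refine (norm_add_le _ _).trans ?_
              rw [norm_mul, norm_mul, hnp, hnq]
              gcongr <;> first | exact hT1 | exact hT2
          _ ≤ (2/9) * q * |θ| ^ 3 := by
              rw [habs1, habs2]
              have hpq3 : p * q ^ 3 + q * p ^ 3 ≤ q := by
                have ha : p * (p ^ 2 + q ^ 2) ≤ 1 := by nlinarith [mul_pos hp hq0]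
                nlinarith [mul_le_mul_of_nonneg_left ha hq0.le]
              nlinarith [mul_le_mul_of_nonneg_left hpq3
                (show (0:ℝ) ≤ (2/9) * |θ| ^ 3 by positivity)]
      have hx_le : p * q * θ ^ 2 / 2 ≤ q * θ ^ 2 / 2 := by
        nlinarith [mul_nonneg (mul_nonneg (show (0:ℝ) ≤ 1 - p by linarith) hq0.le) (sq_nonneg θ)]
      have hxnorm : ‖((p * q * θ ^ 2 / 2 : ℝ) : ℂ)‖ = p * q * θ ^ 2 / 2 := by
        rw [Complex.norm_real, Real.norm_eq_abs]
        exact abs_of_nonneg (by positivity)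
      have hθsq : θ ^ 2 = |θ| ^ 2 := (_root_.sq_abs θ).symm
      have hu_tri : ‖g - 1‖ ≤ (2/9) * q * |θ| ^ 3 + p * q * θ ^ 2 / 2 := by
        have hrw : g - 1 = (g - 1 + ((p * q * θ ^ 2 / 2 : ℝ) : ℂ))
            - ((p * q * θ ^ 2 / 2 : ℝ) : ℂ) := by ring
        rw [hrw]
        refine (norm_sub_le _ _).trans ?_
        rw [hxnorm]
        exact add_le_add_left hR_le _
      have hpq4 : p * q ≤ 1/4 := by nlinarith [sq_nonneg (p - q)]
      have hq3 : (2/9) * q * |θ| ^ 3 ≤ (2/9) * q * θ ^ 2 := by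
        rw [hθsq]
        nlinarith [mul_nonneg hq0.le (sq_nonneg |θ|)]
      have hu_small : ‖g - 1‖ ≤ q * θ ^ 2 := by
        have h8 : p * q * θ ^ 2 / 2 ≤ q * θ ^ 2 / 2 := hx_le
        nlinarith [hu_tri, mul_nonneg hq0.le (sq_nonneg θ)]
      have hu_half : ‖g - 1‖ ≤ 1/2 := by
        have h8 : θ ^ 2 ≤ 1 := by rw [hθsq]; nlinarith
        have h9 : p * q * θ ^ 2 / 2 ≤ 1/8 := by nlinarith [mul_pos hp hq0]
        have h10 : (2/9) * q * |θ| ^ 3 ≤ 2/9 := by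
          have : |θ| ^ 3 ≤ 1 := by nlinarith [pow_nonneg hθ0 3]
          nlinarith
        linarith [hu_tri]
      have hlog := hlog_small hu_half
      calc ‖Complex.log g + ((p * q * θ ^ 2 / 2 : ℝ) : ℂ)‖
          = ‖(Complex.log g - (g - 1)) + (g - 1 + ((p * q * θ ^ 2 / 2 : ℝ) : ℂ))‖ := by
            congr 1; ring
        _ ≤ ‖Complex.log g - (g - 1)‖ + ‖g - 1 + ((p * q * θ ^ 2 / 2 : ℝ) : ℂ)‖ :=
            norm_add_le _ _
        _ ≤ ‖g - 1‖ ^ 2 + (2/9) * q * |θ| ^ 3 := by gcongr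
        _ ≤ 25 * q * |θ| ^ 3 := by
            have h1 : ‖g - 1‖ ^ 2 ≤ (q * θ ^ 2) ^ 2 :=
              pow_le_pow_left₀ (norm_nonneg _) hu_small 2
            have hqθ1 : q * |θ| ≤ 1 := by nlinarith
            have h3 : q * |θ| ^ 3 * (q * |θ|) ≤ q * |θ| ^ 3 * 1 :=
              mul_le_mul_of_nonneg_left hqθ1 (by positivity)
            have h2 : (q * θ ^ 2) ^ 2 ≤ q * |θ| ^ 3 := by
              rw [hθsq]; nlinarith [h3]
            nlinarith [pow_nonneg hθ0 3]
    · -- large θ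
      have hθ3 : |θ| ≤ |θ| ^ 3 := by
        nlinarith [mul_nonneg (mul_nonneg hθ0 (show (0:ℝ) ≤ |θ| - 1 by linarith))
          (show (0:ℝ) ≤ |θ| + 1 by linarith)]
      have hθsq : θ ^ 2 ≤ |θ| ^ 3 := by
        have : θ ^ 2 = |θ| ^ 2 := (_root_.sq_abs θ).symm
        nlinarith
      have hxnorm : ‖((p * q * θ ^ 2 / 2 : ℝ) : ℂ)‖ = p * q * θ ^ 2 / 2 := by
        rw [Complex.norm_real, Real.norm_eq_abs]
        exact abs_of_nonneg (by positivity)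
      have hx3 : p * q * θ ^ 2 / 2 ≤ q * |θ| ^ 3 / 2 := by
        nlinarith [mul_le_mul_of_nonneg_left hθsq hq0.le,
          mul_nonneg (mul_nonneg (show (0:ℝ) ≤ 1 - p by linarith) hq0.le) (sq_nonneg θ)]
      rcases le_or_gt ‖g - 1‖ (1/2) with hu | hu
      · have hlog := hlog_small hu
        calc ‖Complex.log g + ((p * q * θ ^ 2 / 2 : ℝ) : ℂ)‖
            = ‖(Complex.log g - (g - 1)) + (g - 1) + ((p * q * θ ^ 2 / 2 : ℝ) : ℂ)‖ := by
              congr 1; ring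
          _ ≤ ‖(Complex.log g - (g - 1)) + (g - 1)‖ + ‖((p * q * θ ^ 2 / 2 : ℝ) : ℂ)‖ :=
              norm_add_le _ _
          _ ≤ (‖Complex.log g - (g - 1)‖ + ‖g - 1‖) + p * q * θ ^ 2 / 2 := by
              rw [hxnorm]; gcongr; exact norm_add_le _ _
          _ ≤ (‖g - 1‖ ^ 2 + ‖g - 1‖) + p * q * θ ^ 2 / 2 := by gcongr
          _ ≤ 25 * q * |θ| ^ 3 := by
              have h1 : ‖g - 1‖ ^ 2 ≤ (1/2) * ‖g - 1‖ := by
                nlinarith [norm_nonneg (g - 1)]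
              have h2 : ‖g - 1‖ ≤ 2 * q * |θ| := by nlinarith [hu_le, hθ0]
              have h3 : q * |θ| ≤ q * |θ| ^ 3 := mul_le_mul_of_nonneg_left hθ3 hq0.le
              linarith [norm_nonneg (g - 1)]
      · -- g far from 1 : use crude bound on log
        have hqθ : 1/4 < q * |θ| := by nlinarith [hu_le]
        have hqθ3 : 1/4 < q * |θ| ^ 3 := by nlinarith [mul_le_mul_of_nonneg_left hθ3 hq0.le]
        have hφ_ub : ‖φc‖ ≤ 1 := by
          rw [← hφc]
          calc ‖(p:ℂ) + (q:ℂ) * Complex.exp ((θ:ℂ) * I)‖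
              ≤ ‖(p:ℂ)‖ + ‖(q:ℂ) * Complex.exp ((θ:ℂ) * I)‖ := norm_add_le _ _
            _ = p + q := by
                rw [norm_mul, hnp, hnq, Complex.norm_exp_ofReal_mul_I, mul_one]
            _ = 1 := hpq
        have hlogre : |Real.log ‖g‖| ≤ 2 := by
          have habs_g : ‖g‖ = ‖g‖ := rfl
          rw [hg_norm]
          have hl1 : Real.log ‖φc‖ ≤ 0 := Real.log_nonpos (norm_nonneg _) hφ_ub
          have hl2 : -2 ≤ Real.log ‖φc‖ := by
            have h3 : Real.log (1/3) ≤ Real.log ‖φc‖ :=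
              Real.log_le_log (by norm_num) hφ_lb
            have h4 : Real.log (1/3) = -Real.log 3 := by
              rw [Real.log_div one_ne_zero (by norm_num), Real.log_one]; ring
            have h5 : Real.log 3 ≤ 2 := by
              have := Real.log_le_sub_one_of_pos (show (0:ℝ) < 3 by norm_num)
              linarith
            linarith
          rw [abs_le]; exact ⟨hl2, hl1.trans (by norm_num)⟩
        have hlog_bound : ‖Complex.log g‖ ≤ 6 := by
          calc ‖Complex.log g‖ = ‖Complex.log g‖ := rfl
            _ ≤ |(Complex.log g).re| + |(Complex.log g).im| :=
                Complex.norm_le_abs_re_add_abs_im _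
            _ ≤ 2 + 4 := by
                gcongr
                · rw [Complex.log_re]; exact hlogre
                · rw [Complex.log_im]
                  exact (Complex.abs_arg_le_pi g).trans Real.pi_le_four
            _ = 6 := by norm_num
        calc ‖Complex.log g + ((p * q * θ ^ 2 / 2 : ℝ) : ℂ)‖
            ≤ ‖Complex.log g‖ + ‖((p * q * θ ^ 2 / 2 : ℝ) : ℂ)‖ := norm_add_le _ _
          _ ≤ 6 + q * |θ| ^ 3 / 2 := by
              rw [hxnorm]; exact add_le_add hlog_bound (by linarith)
          _ ≤ 25 * q * |θ| ^ 3 := by linarith [hqθ3]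

theorem charFun_two_valued_expansion :
    ∃ C : ℝ, 0 < C ∧
      ∀ {Ω : Type} (_ : MeasurableSpace Ω) (μ : Measure Ω), IsProbabilityMeasure μ →
      ∀ (m : ℝ), 0 < m → ∀ (p q : ℝ), 0 < p → p < 1 → q = 1 - p →
      ∀ (β : Ω → ℝ), Measurable β →
        μ {ω | β ω = 0} = ENNReal.ofReal p →
        μ {ω | β ω = m} = ENNReal.ofReal q →
      ∀ (φ : ℝ → ℂ),
        (∀ t : ℝ, φ t = ∫ ω, Complex.exp (2 * Real.pi * Complex.I * t * (β ω)) ∂μ) →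
      ∀ t : ℝ, q * |Real.sin (Real.pi * t * m)| ≤ 1 / 3 →
        ∃ B : ℂ,
          φ t = Complex.exp (2 * Real.pi * Complex.I * q * m * t
                  - 2 * Real.pi ^ 2 * p * q * m ^ 2 * t ^ 2 + B) ∧
          ‖B‖ ≤ C * q * m ^ 3 * |t| ^ 3 := by
  refine ⟨25 * (2 * Real.pi) ^ 3, by positivity, ?_⟩
  intro Ω mΩ μ hμ m hm p q hp hp1 hq β hβ h0 hmq φ hφ t hsin
  have hq0 : 0 < q := by rw [hq]; linarith
  have hpq : p + q = 1 := by rw [hq]; ring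
  -- the two atoms
  set S0 : Set Ω := {ω | β ω = 0} with hS0def
  set Sm : Set Ω := {ω | β ω = m} with hSmdef
  have hS0 : MeasurableSet S0 := hβ (measurableSet_singleton 0)
  have hSm : MeasurableSet Sm := hβ (measurableSet_singleton m)
  have hdisj : Disjoint S0 Sm := by
    rw [Set.disjoint_left]
    intro ω hω0 hωm
    exact hm.ne (by rw [← hω0, ← hωm])
  have hunion : μ (S0 ∪ Sm) = 1 := by
    rw [measure_union hdisj hSm, h0, hmq, ← ENNReal.ofReal_add hp.le hq0.le, hpq,
      ENNReal.ofReal_one]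
  have hcompl : μ (S0 ∪ Sm)ᶜ = 0 := by
    rw [measure_compl (hS0.union hSm) (measure_ne_top μ _), hunion, measure_univ,
      tsub_self]
  -- a.e. equality with an indicator function
  set c1 : ℂ := Complex.exp (2 * Real.pi * Complex.I * t * m) with hc1
  have hae : (fun ω => Complex.exp (2 * Real.pi * Complex.I * t * (β ω)))
      =ᵐ[μ] fun ω => S0.indicator (fun _ => (1:ℂ)) ω + Sm.indicator (fun _ => c1) ω := by
    have hfull : ∀ᵐ ω ∂μ, ω ∈ S0 ∪ Sm := by
      rw [MeasureTheory.ae_iff]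
      exact hcompl
    filter_upwards [hfull] with ω hω
    rcases hω with hω | hω
    · have hω' : β ω = 0 := hω
      have hωm : ω ∉ Sm := by
        intro hh
        exact hm.ne' (by rw [← (hh : β ω = m), hω'])
      rw [Set.indicator_of_mem hω, Set.indicator_of_notMem hωm, hω']
      simp
    · have hω' : β ω = m := hω
      have hω0 : ω ∉ S0 := by
        intro hh
        exact hm.ne' (by rw [← hω', (hh : β ω = 0)])
      rw [Set.indicator_of_mem hω, Set.indicator_of_notMem hω0, hω']
      simp [hc1]
  have hφt : φ t = (p : ℂ) + (q : ℂ) * c1 := by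
    rw [hφ t, integral_congr_ae hae, integral_add
      ((integrable_const (1:ℂ)).indicator hS0) ((integrable_const c1).indicator hSm),
      integral_indicator_const _ hS0, integral_indicator_const _ hSm, measureReal_def, measureReal_def, h0, hmq,
      ENNReal.toReal_ofReal hp.le, ENNReal.toReal_ofReal hq0.le]
    simp [Complex.real_smul]
  -- apply the key expansion with θ = 2 π t m
  have hsin' : q * |Real.sin ((2 * Real.pi * t * m) / 2)| ≤ 1 / 3 := by
    rw [show (2 * Real.pi * t * m) / 2 = Real.pi * t * m by ring]
    exact hsin
  obtain ⟨B, hB1, hB2⟩ := key_expansion p q (2 * Real.pi * t * m) hp hp1 hq hsin'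
  have hc1' : c1 = Complex.exp (((2 * Real.pi * t * m : ℝ) : ℂ) * I) := by
    rw [hc1]; congr 1; push_cast; ring
  refine ⟨B, ?_, ?_⟩
  · rw [hφt, hc1', hB1]
    congr 1
    push_cast
    ring
  · refine hB2.trans (le_of_eq ?_)
    have habs : |2 * Real.pi * t * m| = 2 * Real.pi * m * |t| := by
      rw [abs_mul, abs_mul, abs_mul]
      rw [abs_of_pos Real.pi_pos, abs_of_pos hm]
      norm_num
      ring
    rw [habs]
    ring
end

section
/- For every real t with |t| ≤ 1/2 and all positive integers m and k with k ≥ 2, one has Σ_{j=m}^{m+k-1} sin²(πjt) ≥ (k/4)·min(1, (tk)²). -/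
open Finset Real

private lemma aux_cos {x : ℝ} (hx0 : 0 ≤ x) (hx1 : x ≤ 1) :
    Real.cos (Real.pi * x / 2) ≤ 1 - x ^ 2 / 2 := by
  have hpi := Real.pi_pos
  have hs : Real.sin (Real.pi * x / 4) ^ 2 = 1 / 2 - Real.cos (Real.pi * x / 2) / 2 := by
    rw [Real.sin_sq_eq_half_sub]; ring_nf
  have hlb : 2 / Real.pi * (Real.pi * x / 4) ≤ Real.sin (Real.pi * x / 4) :=
    Real.mul_le_sin (by positivity) (by nlinarith)
  have h2 : x / 2 ≤ Real.sin (Real.pi * x / 4) := by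
    have h : 2 / Real.pi * (Real.pi * x / 4) = x / 2 := by field_simp; ring
    linarith [h ▸ hlb]
  nlinarith [sq_nonneg (Real.sin (Real.pi * x / 4))]

private lemma aux_concave {lam u : ℝ} (h0 : 0 ≤ lam) (h1 : lam ≤ 1)
    (hu0 : 0 ≤ u) (hu : u ≤ Real.pi) : lam * Real.sin u ≤ Real.sin (lam * u) := by
  have h := strictConcaveOn_sin_Icc.concaveOn.2 (⟨hu0, hu⟩ : u ∈ Set.Icc 0 Real.pi)
    (⟨le_refl (0:ℝ), Real.pi_pos.le⟩ : (0:ℝ) ∈ Set.Icc 0 Real.pi)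
    h0 (by linarith : (0:ℝ) ≤ 1 - lam) (by ring)
  simpa using h

set_option maxHeartbeats 1000000 in
private lemma main_aux (t : ℝ) (ht0 : 0 ≤ t) (ht : t ≤ 1 / 2)
    (m k : ℕ) (hm : 0 < m) (hk : 2 ≤ k) :
    ∑ j ∈ Finset.Icc m (m + k - 1), Real.sin (Real.pi * (j : ℝ) * t) ^ 2
      ≥ ((k : ℝ) / 4) * min 1 ((t * k) ^ 2) := by
  have hpi := Real.pi_pos
  have hkR : (2 : ℝ) ≤ (k : ℝ) := by exact_mod_cast hk
  have hkpos : (0 : ℝ) < k := by linarith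
  rcases eq_or_lt_of_le ht0 with h0 | htpos
  · rw [← h0]
    norm_num
  -- t > 0
  have hsinpos : 0 < Real.sin (Real.pi * t) :=
    Real.sin_pos_of_pos_of_lt_pi (by positivity) (by nlinarith)
  have hsin_lb : 2 * t ≤ Real.sin (Real.pi * t) := by
    have h1 := Real.mul_le_sin (x := Real.pi * t) (by positivity) (by nlinarith)
    have h : 2 / Real.pi * (Real.pi * t) = 2 * t := by field_simp
    linarith [h ▸ h1]
  set F : ℕ → ℝ := fun i => Real.sin (Real.pi * (2 * (m : ℝ) + 2 * i - 1) * t) with hF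
  have tele : ∀ i : ℕ, Real.sin (Real.pi * ((m + i : ℕ) : ℝ) * t) ^ 2
      = 1 / 2 - (F (i + 1) - F i) / (4 * Real.sin (Real.pi * t)) := by
    intro i
    have hd : F (i + 1) - F i
        = 2 * Real.sin (Real.pi * t) * Real.cos (2 * (Real.pi * ((m + i : ℕ) : ℝ) * t)) := by
      rw [hF]
      simp only
      rw [Real.sin_sub_sin]
      push_cast
      ring_nf
    rw [hd, Real.sin_sq_eq_half_sub]
    field_simp
    ring
  have hIcc : Finset.Icc m (m + k - 1) = Finset.Ico m (m + k) := by
    rw [← Finset.Ico_add_one_right_eq_Icc]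
    congr 1
    omega
  have hsum : ∑ j ∈ Finset.Icc m (m + k - 1), Real.sin (Real.pi * (j : ℝ) * t) ^ 2
      = (k : ℝ) / 2 - (F k - F 0) / (4 * Real.sin (Real.pi * t)) := by
    rw [hIcc, Finset.sum_Ico_eq_sum_range]
    simp only [Nat.add_sub_cancel_left]
    calc ∑ i ∈ Finset.range k, Real.sin (Real.pi * ((m + i : ℕ) : ℝ) * t) ^ 2
        = ∑ i ∈ Finset.range k, (1 / 2 - (F (i + 1) - F i) / (4 * Real.sin (Real.pi * t))) :=
          Finset.sum_congr rfl fun i _ => tele i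
      _ = ∑ i ∈ Finset.range k, (1 / 2 : ℝ)
            - ∑ i ∈ Finset.range k, ((F (i + 1) - F i) / (4 * Real.sin (Real.pi * t))) :=
          Finset.sum_sub_distrib _ _
      _ = (k : ℝ) / 2 - (∑ i ∈ Finset.range k, (F (i + 1) - F i)) / (4 * Real.sin (Real.pi * t)) := by
          rw [Finset.sum_const, Finset.card_range, nsmul_eq_mul, ← Finset.sum_div]
          ring
      _ = (k : ℝ) / 2 - (F k - F 0) / (4 * Real.sin (Real.pi * t)) := by
          rw [Finset.sum_range_sub]
  have hFk : F k - F 0 = 2 * Real.sin (Real.pi * k * t)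
      * Real.cos (Real.pi * (2 * (m : ℝ) + (k : ℝ) - 1) * t) := by
    rw [hF]
    simp only [Nat.cast_zero]
    rw [Real.sin_sub_sin]
    ring_nf
  rw [hsum, hFk]
  set c := Real.cos (Real.pi * (2 * (m : ℝ) + (k : ℝ) - 1) * t) with hc_def
  have hc : |c| ≤ 1 := Real.abs_cos_le_one _
  have hden : (0:ℝ) < 4 * Real.sin (Real.pi * t) := by linarith
  rcases le_total 1 (t * k) with hbig | hsmall
  · -- case t*k ≥ 1
    have hmin : min 1 ((t * k) ^ 2) = 1 := by
      rw [min_eq_left]; nlinarith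
    rw [hmin, mul_one]
    have hprod : 2 * Real.sin (Real.pi * k * t) * c ≤ 2 := by
      have h2 : Real.sin (Real.pi * k * t) * c ≤ 1 := by
        calc Real.sin (Real.pi * k * t) * c ≤ |Real.sin (Real.pi * k * t) * c| := le_abs_self _
          _ = |Real.sin (Real.pi * k * t)| * |c| := abs_mul _ _
          _ ≤ 1 := by
              nlinarith [abs_nonneg (Real.sin (Real.pi * k * t)),
                Real.abs_sin_le_one (Real.pi * k * t)]
      linarith
    have h1 : (2 * Real.sin (Real.pi * k * t) * c) / (4 * Real.sin (Real.pi * t))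
        ≤ 2 / (4 * Real.sin (Real.pi * t)) :=
      div_le_div_of_nonneg_right hprod hden.le
    have h2 : 2 / (4 * Real.sin (Real.pi * t)) ≤ (k:ℝ) / 4 := by
      rw [div_le_div_iff₀ hden (by norm_num)]
      nlinarith
    linarith
  · -- case t*k ≤ 1
    have hmin : min 1 ((t * k) ^ 2) ≤ (t * k) ^ 2 := min_le_right _ _
    have hktpos : (0:ℝ) < Real.pi * k * t := by positivity
    have hsk0 : 0 ≤ Real.sin (Real.pi * k * t) := by
      apply Real.sin_nonneg_of_nonneg_of_le_pi hktpos.le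
      nlinarith
    have hhalf : Real.sin (Real.pi * k * t)
        = 2 * Real.sin (Real.pi * k * t / 2) * Real.cos (Real.pi * k * t / 2) := by
      rw [← Real.sin_two_mul]; ring_nf
    have hcos : Real.cos (Real.pi * k * t / 2) ≤ 1 - (t * k) ^ 2 / 2 := by
      have h1 := aux_cos (x := t * k) (by positivity) hsmall
      have he : Real.pi * (t * k) / 2 = Real.pi * k * t / 2 := by ring
      rw [he] at h1
      exact h1
    have hcos0 : 0 ≤ Real.cos (Real.pi * k * t / 2) := by
      apply Real.cos_nonneg_of_mem_Icc
      constructor <;> nlinarith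
    have hsin0 : 0 ≤ Real.sin (Real.pi * k * t / 2) := by
      apply Real.sin_nonneg_of_nonneg_of_le_pi (by positivity)
      nlinarith
    have hconc : (2 / (k : ℝ)) * Real.sin (Real.pi * k * t / 2) ≤ Real.sin (Real.pi * t) := by
      have h1 := aux_concave (lam := 2 / (k:ℝ)) (u := Real.pi * k * t / 2)
        (by positivity) (by rw [div_le_one hkpos]; linarith) (by positivity) (by nlinarith)
      have he : 2 / (k:ℝ) * (Real.pi * k * t / 2) = Real.pi * t := by
        field_simp
      rw [he] at h1
      exact h1
    have hkey : Real.sin (Real.pi * k * t)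
        ≤ (k : ℝ) * Real.sin (Real.pi * t) * (1 - (t * k) ^ 2 / 2) := by
      rw [hhalf]
      have h1 : Real.sin (Real.pi * k * t / 2) ≤ (k : ℝ) / 2 * Real.sin (Real.pi * t) := by
        have h3 := mul_le_mul_of_nonneg_left hconc (by positivity : (0:ℝ) ≤ (k:ℝ)/2)
        have h4 : (k:ℝ)/2 * (2/(k:ℝ) * Real.sin (Real.pi * k * t / 2))
            = Real.sin (Real.pi * k * t / 2) := by field_simp
        linarith [h4 ▸ h3]
      have h2 : (0:ℝ) ≤ 1 - (t * k) ^ 2 / 2 := by nlinarith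
      nlinarith
    have hprod : 2 * Real.sin (Real.pi * k * t) * c
        ≤ 2 * ((k : ℝ) * Real.sin (Real.pi * t) * (1 - (t * k) ^ 2 / 2)) := by
      have hc1 : c ≤ 1 := (abs_le.mp hc).2
      have h1 : Real.sin (Real.pi * k * t) * c ≤ Real.sin (Real.pi * k * t) := by nlinarith
      linarith
    have hfin : (2 * Real.sin (Real.pi * k * t) * c) / (4 * Real.sin (Real.pi * t))
        ≤ (k : ℝ) * (1 - (t * k) ^ 2 / 2) / 2 := by
      rw [div_le_div_iff₀ hden (by norm_num)]
      nlinarith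
    have hrhs : ((k : ℝ) / 4) * min 1 ((t * k) ^ 2) ≤ ((k : ℝ) / 4) * (t * k) ^ 2 :=
      mul_le_mul_of_nonneg_left hmin (by positivity)
    have hlast : (k : ℝ) / 2 - (k : ℝ) * (1 - (t * k) ^ 2 / 2) / 2
        = (k : ℝ) / 4 * (t * k) ^ 2 := by ring
    linarith

/-- Freiman–Pitman's Lemma 8: a lower bound for sums of squared sines over a
block of `k` consecutive integer frequencies starting at `m`. -/
theorem sum_sin_sq_lower_bound (t : ℝ) (ht : |t| ≤ 1 / 2)
    (m k : ℕ) (hm : 0 < m) (hk : 2 ≤ k) :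
    ∑ j ∈ Finset.Icc m (m + k - 1), Real.sin (Real.pi * (j : ℝ) * t) ^ 2
      ≥ ((k : ℝ) / 4) * min 1 ((t * k) ^ 2) := by
  have h := main_aux |t| (abs_nonneg t) ht m k hm hk
  have hL : ∑ j ∈ Finset.Icc m (m + k - 1), Real.sin (Real.pi * (j : ℝ) * |t|) ^ 2
      = ∑ j ∈ Finset.Icc m (m + k - 1), Real.sin (Real.pi * (j : ℝ) * t) ^ 2 := by
    apply Finset.sum_congr rfl
    intro j _
    rcases abs_choice t with h1 | h1 <;> rw [h1]
    rw [mul_neg, Real.sin_neg]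
    ring
  have hR : (|t| * k) ^ 2 = (t * k) ^ 2 := by
    rw [mul_pow, mul_pow, sq_abs]
  rw [hL, hR] at h
  exact h
end

section
/- Let ν be a positive integer, let ϑ_1,…,ϑ_ν be reals with 0 < ϑ_j < 1, let k_1 < k_2 < … < k_ν be positive integers, and let β_1,…,β_ν be independent random variables with P{β_j = 0} = ϑ_j and P{β_j = k_j} = 1 − ϑ_j. Set B_ν = β_1 + … + β_ν, φ_{B_ν}(t) = E e^{2πitB_ν}, θ_j = ϑ_j(1−ϑ_j), and for a positive integer q let φ(q) = (∫_{−1/2}^{1/2} |Σ_{j=1}^{ν} θ_j cos(2πtk_j)|^{2q} dt)^{1/(2q)} / (Σ_{j=1}^{ν} θ_j). Then for every positive integer q and every real c with 0 < c ≤ 1, ∫₀¹ |φ_{B_ν}(t)| dt ≤ (φ(q)/c)^{2q} + exp(−(1−c)·Σ_{j=1}^{ν} θ_j). -/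
open MeasureTheory ProbabilityTheory Finset Complex

section auxlemmas
variable {Ω : Type*} [MeasurableSpace Ω] {μ : Measure Ω}

lemma aux_indep_integral_mul_complex {X Y : Ω → ℂ} (h : IndepFun X Y μ)
    (hX : Integrable X μ) (hY : Integrable Y μ) :
    ∫ ω, X ω * Y ω ∂μ = (∫ ω, X ω ∂μ) * ∫ ω, Y ω ∂μ := by
  have hXY : Integrable (fun ω => X ω * Y ω) μ := by
    simpa [Pi.mul_def] using h.integrable_mul hX hY
  have hrr : IndepFun (fun ω => (X ω).re) (fun ω => (Y ω).re) μ :=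
    h.comp Complex.measurable_re Complex.measurable_re
  have hri : IndepFun (fun ω => (X ω).re) (fun ω => (Y ω).im) μ :=
    h.comp Complex.measurable_re Complex.measurable_im
  have hir : IndepFun (fun ω => (X ω).im) (fun ω => (Y ω).re) μ :=
    h.comp Complex.measurable_im Complex.measurable_re
  have hii : IndepFun (fun ω => (X ω).im) (fun ω => (Y ω).im) μ :=
    h.comp Complex.measurable_im Complex.measurable_im
  have iXr : Integrable (fun ω => (X ω).re) μ := hX.re
  have iXi : Integrable (fun ω => (X ω).im) μ := hX.im
  have iYr : Integrable (fun ω => (Y ω).re) μ := hY.re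
  have iYi : Integrable (fun ω => (Y ω).im) μ := hY.im
  have irr : Integrable (fun ω => (X ω).re * (Y ω).re) μ := by
    simpa [Pi.mul_def] using hrr.integrable_mul iXr iYr
  have iri : Integrable (fun ω => (X ω).re * (Y ω).im) μ := by
    simpa [Pi.mul_def] using hri.integrable_mul iXr iYi
  have iir : Integrable (fun ω => (X ω).im * (Y ω).re) μ := by
    simpa [Pi.mul_def] using hir.integrable_mul iXi iYr
  have iii : Integrable (fun ω => (X ω).im * (Y ω).im) μ := by
    simpa [Pi.mul_def] using hii.integrable_mul iXi iYi
  have err : ∫ ω, (X ω).re * (Y ω).re ∂μ = (∫ ω, (X ω).re ∂μ) * ∫ ω, (Y ω).re ∂μ := by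
    simpa [Pi.mul_def] using hrr.integral_fun_mul_eq_mul_integral iXr.aestronglyMeasurable iYr.aestronglyMeasurable
  have eri : ∫ ω, (X ω).re * (Y ω).im ∂μ = (∫ ω, (X ω).re ∂μ) * ∫ ω, (Y ω).im ∂μ := by
    simpa [Pi.mul_def] using hri.integral_fun_mul_eq_mul_integral iXr.aestronglyMeasurable iYi.aestronglyMeasurable
  have eir : ∫ ω, (X ω).im * (Y ω).re ∂μ = (∫ ω, (X ω).im ∂μ) * ∫ ω, (Y ω).re ∂μ := by
    simpa [Pi.mul_def] using hir.integral_fun_mul_eq_mul_integral iXi.aestronglyMeasurable iYr.aestronglyMeasurable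
  have eii : ∫ ω, (X ω).im * (Y ω).im ∂μ = (∫ ω, (X ω).im ∂μ) * ∫ ω, (Y ω).im ∂μ := by
    simpa [Pi.mul_def] using hii.integral_fun_mul_eq_mul_integral iXi.aestronglyMeasurable iYi.aestronglyMeasurable
  have hXre : (∫ ω, X ω ∂μ).re = ∫ ω, (X ω).re ∂μ := by
    simpa using (integral_re hX).symm
  have hXim : (∫ ω, X ω ∂μ).im = ∫ ω, (X ω).im ∂μ := by
    simpa using (integral_im hX).symm
  have hYre : (∫ ω, Y ω ∂μ).re = ∫ ω, (Y ω).re ∂μ := by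
    simpa using (integral_re hY).symm
  have hYim : (∫ ω, Y ω ∂μ).im = ∫ ω, (Y ω).im ∂μ := by
    simpa using (integral_im hY).symm
  apply Complex.ext
  · have h1 : (∫ ω, X ω * Y ω ∂μ).re = ∫ ω, (X ω * Y ω).re ∂μ := by
      simpa using (integral_re hXY).symm
    rw [h1, Complex.mul_re, hXre, hXim, hYre, hYim]
    simp_rw [Complex.mul_re]
    rw [integral_sub irr iii, err, eii]
  · have h1 : (∫ ω, X ω * Y ω ∂μ).im = ∫ ω, (X ω * Y ω).im ∂μ := by
      simpa using (integral_im hXY).symm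
    rw [h1, Complex.mul_im, hXre, hXim, hYre, hYim]
    simp_rw [Complex.mul_im]
    rw [integral_add iri iir, eri, eir]

lemma aux_integral_finset_prod [IsProbabilityMeasure μ] {f : ℕ → Ω → ℂ}
    (hindep : iIndepFun f μ) (hmeas : ∀ i, Measurable (f i))
    (hbdd : ∀ i ω, ‖f i ω‖ ≤ 1) (s : Finset ℕ) :
    ∫ ω, ∏ j ∈ s, f j ω ∂μ = ∏ j ∈ s, ∫ ω, f j ω ∂μ := by
  classical
  have hint : ∀ u : Finset ℕ, Integrable (fun ω => ∏ j ∈ u, f j ω) μ := by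
    intro u
    refine Integrable.mono' (integrable_const (1 : ℝ))
      (Finset.measurable_prod u fun j _ => hmeas j).aestronglyMeasurable ?_
    filter_upwards with ω
    calc ‖∏ j ∈ u, f j ω‖ ≤ ∏ j ∈ u, ‖f j ω‖ := norm_prod_le _ _
    _ ≤ 1 := Finset.prod_le_one (fun j _ => norm_nonneg _) (fun j _ => hbdd j ω)
  induction s using Finset.induction_on with
  | empty => simp
  | @insert i s hi ih =>
    have hpair : IndepFun (f i) (fun ω => ∏ j ∈ s, f j ω) μ := by
      have := (hindep.indepFun_finset_prod_of_notMem hmeas hi).symm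
      simpa [Finset.prod_fn] using this
    simp_rw [Finset.prod_insert hi]
    rw [aux_indep_integral_mul_complex hpair (by simpa using hint {i}) (hint s), ih]

lemma aux_two_point [IsProbabilityMeasure μ] {X : Ω → ℝ} (hX : Measurable X)
    {ϑ κ : ℝ} (h0le : 0 ≤ ϑ) (hle1 : ϑ ≤ 1) (hκ : κ ≠ 0)
    (h0 : μ {ω | X ω = 0} = ENNReal.ofReal ϑ)
    (hk : μ {ω | X ω = κ} = ENNReal.ofReal (1 - ϑ))
    (f : ℝ → ℂ) :
    ∫ ω, f (X ω) ∂μ = (ϑ : ℂ) * f 0 + ((1 - ϑ : ℝ) : ℂ) * f κ := by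
  have hA : MeasurableSet {ω | X ω = 0} := hX (measurableSet_singleton 0)
  have hB : MeasurableSet {ω | X ω = κ} := hX (measurableSet_singleton κ)
  set F : Ω → ℂ := fun ω => if X ω = 0 then f 0 else f κ with hF
  have hFmeas : Measurable F := Measurable.ite hA measurable_const measurable_const
  have hFint : Integrable F μ := by
    refine Integrable.mono' (integrable_const (max ‖f 0‖ ‖f κ‖))
      hFmeas.aestronglyMeasurable ?_
    filter_upwards with ω
    by_cases h : X ω = 0 <;> simp [F, h, le_max_left, le_max_right]
  have hdisj : Disjoint {ω | X ω = 0} {ω | X ω = κ} := by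
    rw [Set.disjoint_left]
    rintro ω (h1 : X ω = 0) (h2 : X ω = κ)
    exact hκ (h1 ▸ h2.symm)
  have hunion : μ ({ω | X ω = 0} ∪ {ω | X ω = κ}) = 1 := by
    rw [measure_union hdisj hB, h0, hk, ← ENNReal.ofReal_add h0le (by linarith)]
    norm_num
  have hae : ∀ᵐ ω ∂μ, X ω = 0 ∨ X ω = κ := by
    rw [ae_iff]
    have : {ω | ¬(X ω = 0 ∨ X ω = κ)} = ({ω | X ω = 0} ∪ {ω | X ω = κ})ᶜ := by
      ext ω; simp [Set.mem_union, not_or]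
    rw [this, measure_compl (hA.union hB) (measure_ne_top μ _), hunion, measure_univ,
      tsub_self]
  have hcongr : ∫ ω, f (X ω) ∂μ = ∫ ω, F ω ∂μ := by
    refine integral_congr_ae ?_
    filter_upwards [hae] with ω h
    rcases h with h | h
    · simp [F, h]
    · have hne : X ω ≠ 0 := by rw [h]; exact hκ
      simp only [F]; rw [if_neg hne, h]
  rw [hcongr, ← integral_add_compl hA hFint]
  have e1 : ∫ ω in {ω | X ω = 0}, F ω ∂μ = (ϑ : ℂ) * f 0 := by
    rw [setIntegral_congr_fun hA (g := fun _ => f 0) (fun ω hω => by simp [F, hω.out])]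
    rw [setIntegral_const, measureReal_def, h0, ENNReal.toReal_ofReal h0le, Complex.real_smul]
  have e2 : ∫ ω in {ω | X ω = 0}ᶜ, F ω ∂μ = ((1 - ϑ : ℝ) : ℂ) * f κ := by
    rw [setIntegral_congr_fun hA.compl (g := fun _ => f κ)
      (fun ω hω => by simp only [F]; rw [if_neg (by simpa using hω)])]
    have hμc : μ {ω | X ω = 0}ᶜ = ENNReal.ofReal (1 - ϑ) := by
      rw [measure_compl hA (measure_ne_top μ _), h0, measure_univ,
        ENNReal.ofReal_sub _ h0le, ENNReal.ofReal_one]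
    rw [setIntegral_const, measureReal_def, hμc, ENNReal.toReal_ofReal (by linarith), Complex.real_smul]
  rw [e1, e2]

lemma aux_norm_factor {ϑ a : ℝ} (h0 : 0 ≤ ϑ) (h1 : ϑ ≤ 1) :
    ‖(ϑ : ℂ) + ((1 - ϑ : ℝ) : ℂ) * Complex.exp ((a : ℂ) * Complex.I)‖
      ≤ Real.exp (-(ϑ * (1 - ϑ)) * (1 - Real.cos a)) := by
  set z : ℂ := (ϑ : ℂ) + ((1 - ϑ : ℝ) : ℂ) * Complex.exp ((a : ℂ) * Complex.I) with hz
  have hre : z.re = ϑ + (1 - ϑ) * Real.cos a := by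
    simp [z, Complex.exp_ofReal_mul_I_re]
  have him : z.im = (1 - ϑ) * Real.sin a := by
    simp [z, Complex.exp_ofReal_mul_I_im]
  have hsq : ‖z‖ ^ 2 = 1 - 2 * (ϑ * (1 - ϑ)) * (1 - Real.cos a) := by
    rw [Complex.sq_norm, Complex.normSq_apply, hre, him]
    linear_combination (1 - ϑ)^2 * Real.sin_sq_add_cos_sq a
  have hbound : ‖z‖ ^ 2 ≤ (Real.exp (-(ϑ * (1 - ϑ)) * (1 - Real.cos a))) ^ 2 := by
    rw [hsq, sq, ← Real.exp_add]
    have := Real.add_one_le_exp (-(ϑ * (1 - ϑ)) * (1 - Real.cos a) +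
      -(ϑ * (1 - ϑ)) * (1 - Real.cos a))
    linarith
  exact le_of_pow_le_pow_left₀ two_ne_zero (Real.exp_nonneg _) hbound

end auxlemmas

theorem integral_charFun_bound_moment_method
    {Ω : Type*} [MeasurableSpace Ω] (μ : Measure Ω) [IsProbabilityMeasure μ]
    (ν : ℕ) (hν : 0 < ν)
    (ϑ : ℕ → ℝ) (hϑ : ∀ j < ν, 0 < ϑ j ∧ ϑ j < 1)
    (k : ℕ → ℕ) (hkpos : ∀ j < ν, 0 < k j)
    (hkmono : ∀ i j, i < j → j < ν → k i < k j)
    (β : ℕ → Ω → ℝ) (hmeas : ∀ j, Measurable (β j))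
    (hindep : iIndepFun β μ)
    (hβ0 : ∀ j < ν, μ {ω | β j ω = 0} = ENNReal.ofReal (ϑ j))
    (hβk : ∀ j < ν, μ {ω | β j ω = (k j : ℝ)} = ENNReal.ofReal (1 - ϑ j))
    (φB : ℝ → ℂ)
    (hφB : ∀ t : ℝ, φB t = ∫ ω, Complex.exp (2 * Real.pi * Complex.I * t *
        (∑ j ∈ Finset.range ν, β j ω)) ∂μ)
    (θ : ℕ → ℝ) (hθ : ∀ j, θ j = ϑ j * (1 - ϑ j))
    (φ : ℕ → ℝ)
    (hφ : ∀ q : ℕ, φ q =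
      (∫ t in (-(1 : ℝ) / 2)..(1 / 2),
          |∑ j ∈ Finset.range ν, θ j * Real.cos (2 * Real.pi * t * (k j : ℝ))| ^ (2 * q))
        ^ ((1 : ℝ) / (2 * q)) / (∑ j ∈ Finset.range ν, θ j)) :
    ∀ (q : ℕ), 0 < q → ∀ (c : ℝ), 0 < c → c ≤ 1 →
      (∫ t in (0 : ℝ)..1, ‖φB t‖)
        ≤ (φ q / c) ^ (2 * q)
          + Real.exp (-(1 - c) * ∑ j ∈ Finset.range ν, θ j) := by
  intro q hq c hc hc1
  have heven : Even (2 * q) := ⟨q, by ring⟩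
  set g : ℝ → ℝ := fun t => ∑ j ∈ Finset.range ν, θ j * Real.cos (2 * Real.pi * t * (k j : ℝ))
    with hg_def
  set S : ℝ := ∑ j ∈ Finset.range ν, θ j with hS_def
  have hθpos : ∀ j ∈ Finset.range ν, 0 < θ j := by
    intro j hj
    obtain ⟨h1, h2⟩ := hϑ j (Finset.mem_range.1 hj)
    rw [hθ]; exact mul_pos h1 (by linarith)
  have hSpos : 0 < S := Finset.sum_pos hθpos ⟨0, Finset.mem_range.2 hν⟩
  have hgcont : Continuous g := by
    apply continuous_finset_sum
    intro j _
    fun_prop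
  -- product representation of φB
  have key : ∀ t : ℝ, φB t = ∏ j ∈ Finset.range ν,
      ((ϑ j : ℂ) + ((1 - ϑ j : ℝ) : ℂ) *
        Complex.exp (((2 * Real.pi * t * (k j : ℝ) : ℝ) : ℂ) * Complex.I)) := by
    intro t
    have hexp_eq : ∀ ω : Ω, Complex.exp (2 * Real.pi * Complex.I * t *
        (∑ j ∈ Finset.range ν, β j ω)) =
        ∏ j ∈ Finset.range ν,
          Complex.exp ((2 * (Real.pi : ℂ) * Complex.I * (t : ℂ)) * ((β j ω : ℝ) : ℂ)) := by
      intro ω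
      rw [← Complex.exp_sum]
      congr 1
      rw [← Finset.mul_sum]
      push_cast
      ring
    rw [hφB t]
    simp_rw [hexp_eq]
    have hfmeas : ∀ j, Measurable (fun ω =>
        Complex.exp ((2 * (Real.pi : ℂ) * Complex.I * (t : ℂ)) * ((β j ω : ℝ) : ℂ))) := by
      intro j
      exact ((Complex.measurable_ofReal.comp (hmeas j)).const_mul _).cexp
    have hnorm1 : ∀ x : ℝ,
        ‖Complex.exp ((2 * (Real.pi : ℂ) * Complex.I * (t : ℂ)) * (x : ℂ))‖ = 1 := by
      intro x
      rw [show (2 * (Real.pi : ℂ) * Complex.I * (t : ℂ)) * (x : ℂ)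
          = ((2 * Real.pi * t * x : ℝ) : ℂ) * Complex.I by push_cast; ring]
      simpa using Complex.norm_exp_ofReal_mul_I (2 * Real.pi * t * x)
    have hindep' : iIndepFun (fun j ω =>
        Complex.exp ((2 * (Real.pi : ℂ) * Complex.I * (t : ℂ)) * ((β j ω : ℝ) : ℂ))) μ := by
      exact hindep.comp
        (fun j => fun x : ℝ => Complex.exp ((2 * (Real.pi : ℂ) * Complex.I * (t : ℂ)) * (x : ℂ)))
        (fun j => (Complex.measurable_ofReal.const_mul _).cexp)
    rw [aux_integral_finset_prod hindep' hfmeas (fun i ω => le_of_eq (hnorm1 _)) (Finset.range ν)]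
    refine Finset.prod_congr rfl fun j hj => ?_
    have hj' := Finset.mem_range.1 hj
    have hκ : (k j : ℝ) ≠ 0 := Nat.cast_ne_zero.2 (hkpos j hj').ne'
    have h2 := aux_two_point (μ := μ) (hmeas j) (hϑ j hj').1.le (hϑ j hj').2.le hκ
      (hβ0 j hj') (hβk j hj')
      (fun x : ℝ => Complex.exp ((2 * (Real.pi : ℂ) * Complex.I * (t : ℂ)) * (x : ℂ)))
    rw [h2]
    congr 1
    · rw [show (2 * (Real.pi : ℂ) * Complex.I * (t : ℂ)) * (((0 : ℝ)) : ℂ) = 0 by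
        push_cast; ring]
      rw [Complex.exp_zero, mul_one]
    · congr 2
      push_cast
      ring
  -- pointwise bound on ‖φB‖
  have hφBle : ∀ t : ℝ, ‖φB t‖ ≤ Real.exp (-(S - g t)) := by
    intro t
    rw [key t]
    calc ‖∏ j ∈ Finset.range ν, ((ϑ j : ℂ) + ((1 - ϑ j : ℝ) : ℂ) *
          Complex.exp (((2 * Real.pi * t * (k j : ℝ) : ℝ) : ℂ) * Complex.I))‖
        = ∏ j ∈ Finset.range ν, ‖(ϑ j : ℂ) + ((1 - ϑ j : ℝ) : ℂ) *
          Complex.exp (((2 * Real.pi * t * (k j : ℝ) : ℝ) : ℂ) * Complex.I)‖ := norm_prod _ _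
      _ ≤ ∏ j ∈ Finset.range ν,
            Real.exp (-(θ j) * (1 - Real.cos (2 * Real.pi * t * (k j : ℝ)))) := by
          refine Finset.prod_le_prod (fun j _ => norm_nonneg _) (fun j hj => ?_)
          have hj' := Finset.mem_range.1 hj
          rw [hθ j]
          exact aux_norm_factor (hϑ j hj').1.le (hϑ j hj').2.le
      _ = Real.exp (∑ j ∈ Finset.range ν,
            -(θ j) * (1 - Real.cos (2 * Real.pi * t * (k j : ℝ)))) := (Real.exp_sum _ _).symm
      _ = Real.exp (-(S - g t)) := by
          congr 1
          rw [neg_sub, hS_def, hg_def, ← Finset.sum_sub_distrib]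
          exact Finset.sum_congr rfl fun j _ => by ring
  have hSg : ∀ t : ℝ, 0 ≤ S - g t := by
    intro t
    rw [hS_def, hg_def, ← Finset.sum_sub_distrib]
    refine Finset.sum_nonneg fun j hj => ?_
    have h1 := (hθpos j hj).le
    have h2 := Real.cos_le_one (2 * Real.pi * t * (k j : ℝ))
    nlinarith
  have hφB1 : ∀ t : ℝ, ‖φB t‖ ≤ 1 := by
    intro t
    refine (hφBle t).trans ?_
    rw [← Real.exp_zero]
    exact Real.exp_le_exp.2 (by linarith [hSg t])
  -- move to set integral
  rw [intervalIntegral.integral_of_le (by norm_num : (0:ℝ) ≤ 1)]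
  set A : Set ℝ := {t | c * S < g t} with hA_def
  have hAmeas : MeasurableSet A := measurableSet_lt measurable_const hgcont.measurable
  have hRHS0 : 0 ≤ (φ q / c) ^ (2 * q) := heven.pow_nonneg _
  by_cases hInt : IntegrableOn (fun t => ‖φB t‖) (Set.Ioc (0:ℝ) 1) volume
  swap
  · rw [MeasureTheory.integral_undef hInt]
    have := Real.exp_pos (-(1 - c) * S)
    linarith
  have hIoc_fin : volume (Set.Ioc (0:ℝ) 1) ≠ ⊤ := by
    rw [Real.volume_Ioc]; simp
  have hind_int : IntegrableOn (Set.indicator A (fun _ => (1:ℝ))) (Set.Ioc (0:ℝ) 1) volume := by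
    exact (integrableOn_const hIoc_fin).indicator hAmeas
  have hconst_int : IntegrableOn (fun _ : ℝ => Real.exp (-(1 - c) * S)) (Set.Ioc (0:ℝ) 1)
      volume := integrableOn_const hIoc_fin
  have step1 : ∫ t in Set.Ioc (0:ℝ) 1, ‖φB t‖
      ≤ ∫ t in Set.Ioc (0:ℝ) 1,
          (Set.indicator A (fun _ => (1:ℝ)) t + Real.exp (-(1 - c) * S)) := by
    refine setIntegral_mono_on hInt (hind_int.add hconst_int) measurableSet_Ioc ?_
    intro t ht
    by_cases hA' : t ∈ A
    · rw [Set.indicator_of_mem hA']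
      have := Real.exp_nonneg (-(1 - c) * S)
      linarith [hφB1 t]
    · rw [Set.indicator_of_notMem hA']
      have h1 : g t ≤ c * S := not_lt.1 (by simpa [hA_def] using hA')
      calc ‖φB t‖ ≤ Real.exp (-(S - g t)) := hφBle t
        _ ≤ Real.exp (-(1 - c) * S) := Real.exp_le_exp.2 (by nlinarith)
        _ = 0 + Real.exp (-(1 - c) * S) := by ring
  have step2 : ∫ t in Set.Ioc (0:ℝ) 1,
      (Set.indicator A (fun _ => (1:ℝ)) t + Real.exp (-(1 - c) * S))
      = (volume (Set.Ioc (0:ℝ) 1 ∩ A)).toReal + Real.exp (-(1 - c) * S) := by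
    rw [integral_add hind_int hconst_int, setIntegral_indicator hAmeas, setIntegral_const,
      setIntegral_const]
    simp only [measureReal_def]
    rw [Real.volume_Ioc]
    norm_num
  -- Markov bound
  have hgq_int : IntegrableOn (fun t => (g t / (c * S)) ^ (2 * q)) (Set.Ioc (0:ℝ) 1) volume :=
    ((hgcont.div_const _).pow _).integrableOn_Ioc
  have markov : (volume (Set.Ioc (0:ℝ) 1 ∩ A)).toReal
      ≤ ∫ t in Set.Ioc (0:ℝ) 1, (g t / (c * S)) ^ (2 * q) := by
    have hrw : (volume (Set.Ioc (0:ℝ) 1 ∩ A)).toReal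
        = ∫ t in Set.Ioc (0:ℝ) 1, Set.indicator A (fun _ => (1:ℝ)) t := by
      rw [setIntegral_indicator hAmeas, setIntegral_const]
      simp [measureReal_def]
    rw [hrw]
    refine setIntegral_mono_on hind_int hgq_int measurableSet_Ioc ?_
    intro t ht
    by_cases hA' : t ∈ A
    · rw [Set.indicator_of_mem hA']
      have hgt : c * S < g t := hA'
      have h1 : (1:ℝ) ≤ g t / (c * S) := (one_le_div (by positivity)).2 hgt.le
      exact one_le_pow₀ h1
    · rw [Set.indicator_of_notMem hA']
      exact heven.pow_nonneg _
  -- periodicity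
  have hgper : Function.Periodic g 1 := by
    intro t
    rw [hg_def]
    refine Finset.sum_congr rfl fun j _ => ?_
    congr 1
    rw [show 2 * Real.pi * (t + 1) * (k j : ℝ)
        = 2 * Real.pi * t * (k j : ℝ) + (k j : ℤ) * (2 * Real.pi) by push_cast; ring]
    exact Real.cos_add_int_mul_two_pi _ _
  have hper : Function.Periodic (fun t => (g t) ^ (2 * q)) 1 := fun t => by
    simp only
    rw [hgper t]
  have hshift : ∫ t in (0:ℝ)..1, (g t) ^ (2 * q)
      = ∫ t in (-(1:ℝ)/2)..(1/2), (g t) ^ (2 * q) := by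
    have h := hper.intervalIntegral_add_eq 0 (-(1:ℝ)/2)
    norm_num at h
    convert h using 2 <;> norm_num
  set Iq : ℝ := ∫ t in (-(1:ℝ)/2)..(1/2), |g t| ^ (2 * q) with hIq_def
  have habs : ∫ t in (-(1:ℝ)/2)..(1/2), (g t) ^ (2 * q) = Iq := by
    rw [hIq_def]
    refine intervalIntegral.integral_congr fun t _ => ?_
    exact (heven.pow_abs _).symm
  have hIq_nonneg : 0 ≤ Iq := by
    rw [hIq_def]
    exact intervalIntegral.integral_nonneg (by norm_num)
      (fun t _ => pow_nonneg (abs_nonneg _) _)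
  have hdiv : ∫ t in Set.Ioc (0:ℝ) 1, (g t / (c * S)) ^ (2 * q) = Iq / (c * S) ^ (2 * q) := by
    simp_rw [div_pow]
    rw [integral_div]
    congr 1
    rw [← intervalIntegral.integral_of_le (by norm_num : (0:ℝ) ≤ 1), hshift, habs]
  -- identify (φ q / c)^(2q)
  have hIq_eq : (∫ t in (-(1:ℝ)/2)..(1/2),
      |∑ j ∈ Finset.range ν, θ j * Real.cos (2 * Real.pi * t * (k j : ℝ))| ^ (2 * q)) = Iq := by
    rw [hIq_def]
  have hφq : (φ q / c) ^ (2 * q) = Iq / (c * S) ^ (2 * q) := by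
    rw [hφ q, hIq_eq]
    rw [div_div, div_pow, mul_pow]
    have hIqpow : (Iq ^ ((1:ℝ) / (2 * (q:ℕ)))) ^ (2 * q) = Iq := by
      rw [← Real.rpow_natCast (Iq ^ ((1:ℝ) / (2 * (q:ℕ)))) (2 * q),
        ← Real.rpow_mul hIq_nonneg]
      rw [show (1:ℝ) / (2 * (q:ℕ)) * ((2 * q : ℕ) : ℝ) = 1 by
        push_cast
        field_simp]
      exact Real.rpow_one Iq
    rw [hIqpow]
    ring_nf
  -- final chain
  calc ∫ t in Set.Ioc (0:ℝ) 1, ‖φB t‖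
      ≤ (volume (Set.Ioc (0:ℝ) 1 ∩ A)).toReal + Real.exp (-(1 - c) * S) := by
        rw [← step2]; exact step1
    _ ≤ Iq / (c * S) ^ (2 * q) + Real.exp (-(1 - c) * S) := by
        have := markov
        rw [hdiv] at this
        linarith
    _ = (φ q / c) ^ (2 * q) + Real.exp (-(1 - c) * S) := by rw [hφq]
end

section
/- Let n be a positive integer and let Z_1,…,Z_n be independent Poisson distributed random variables with E Z_j = 1/j for j = 1,…,n. Let T_n = Σ_{j=1}^{n} j·Z_j. Then P{T_n = n} = exp(−Σ_{j=1}^{n} 1/j). -/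
open MeasureTheory ProbabilityTheory Finset

open scoped Classical in
/-- The finset of tuples `m : ℕ → ℕ` supported on `Icc 1 n` with `∑ j ∈ Icc 1 n, j * m j = k`. -/
noncomputable def PM (n k : ℕ) : Finset (ℕ → ℕ) :=
  ((Fintype.piFinset (fun _ : Fin n => Finset.range (k + 1))).image
      (fun d j => if h : j ∈ Finset.Icc 1 n then d ⟨j - 1, by
        simp only [Finset.mem_Icc] at h; omega⟩ else 0)).filter
    (fun m => ∑ j ∈ Finset.Icc 1 n, j * m j = k)

lemma mem_PM {n k : ℕ} {m : ℕ → ℕ} :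
    m ∈ PM n k ↔ (∀ j, m j ≠ 0 → j ∈ Finset.Icc 1 n) ∧ ∑ j ∈ Finset.Icc 1 n, j * m j = k := by
  classical
  rw [PM, Finset.mem_filter]
  constructor
  · rintro ⟨hm1, hm2⟩
    refine ⟨?_, hm2⟩
    obtain ⟨d, _, rfl⟩ := Finset.mem_image.mp hm1
    intro j hj
    by_contra hjn
    simp [hjn] at hj
  · rintro ⟨hsupp, hsum⟩
    refine ⟨Finset.mem_image.mpr ⟨fun i => m (i + 1), ?_, ?_⟩, hsum⟩
    · refine Fintype.mem_piFinset.mpr fun i => Finset.mem_range.mpr ?_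
      by_cases h0 : m (i + 1) = 0
      · omega
      · have hmem : (i : ℕ) + 1 ∈ Finset.Icc 1 n := hsupp _ h0
        have hle : ((i : ℕ) + 1) * m ((i : ℕ) + 1) ≤ ∑ j ∈ Finset.Icc 1 n, j * m j :=
          Finset.single_le_sum (f := fun j => j * m j) (fun j _ => Nat.zero_le _) hmem
        have : m (i + 1) ≤ (i + 1) * m (i + 1) := Nat.le_mul_of_pos_left _ (Nat.succ_pos i)
        omega
    · funext j
      by_cases hj : j ∈ Finset.Icc 1 n
      · have h1 : 1 ≤ j := (Finset.mem_Icc.mp hj).1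
        simp only [hj, dif_pos]
        congr 1
        omega
      · simp only [hj, dif_neg, not_false_iff]
        by_contra h
        exact hj (hsupp j (Ne.symm h))

/-- The single Poisson-type term `(1/j)^v / v!`. -/
noncomputable def pterm (j v : ℕ) : ℝ := (1 / (j : ℝ)) ^ v / (v.factorial : ℝ)

/-- The sum of products of `pterm`s over `PM n k`. -/
noncomputable def PS (n k : ℕ) : ℝ :=
  ∑ m ∈ PM n k, ∏ j ∈ Finset.Icc 1 n, pterm j (m j)

lemma pterm_zero (j : ℕ) : pterm j 0 = 1 := by simp [pterm]

lemma PM_zero (n : ℕ) : PM n 0 = {fun _ => 0} := by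
  ext m
  rw [mem_PM, Finset.mem_singleton]
  constructor
  · rintro ⟨hsupp, hsum⟩
    funext j
    by_cases hj : j ∈ Finset.Icc 1 n
    · have := (Finset.sum_eq_zero_iff.mp hsum) j hj
      have h1 : 1 ≤ j := (Finset.mem_Icc.mp hj).1
      simpa using Nat.mul_eq_zero.mp this |>.resolve_left (by omega)
    · by_contra h
      exact hj (hsupp j h)
  · rintro rfl
    exact ⟨fun j hj => absurd rfl hj, by simp⟩

lemma PS_zero (n : ℕ) : PS n 0 = 1 := by
  simp [PS, PM_zero, pterm_zero]

/-- Key step: `j * (v+1) * pterm j (v+1) = pterm j v` for `j ≥ 1`. -/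
lemma pterm_step {j : ℕ} (hj : 1 ≤ j) (v : ℕ) :
    ((j : ℝ) * ((v : ℝ) + 1)) * pterm j (v + 1) = pterm j v := by
  have hj0 : (j : ℝ) ≠ 0 := Nat.cast_ne_zero.mpr (by omega)
  have hf : ((v.factorial : ℝ)) ≠ 0 := Nat.cast_ne_zero.mpr v.factorial_ne_zero
  have hv1 : ((v : ℝ) + 1) ≠ 0 := by positivity
  simp only [pterm, Nat.factorial_succ, pow_succ, Nat.cast_mul, Nat.cast_add, Nat.cast_one]
  field_simp

/-- The inner sum for a fixed `j ≤ k`. -/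
lemma inner_sum_eq {n k j : ℕ} (hj : j ∈ Finset.Icc 1 n) (hjk : j ≤ k) :
    ∑ m ∈ PM n k, ((j : ℝ) * (m j : ℝ)) * ∏ l ∈ Finset.Icc 1 n, pterm l (m l)
      = PS n (k - j) := by
  classical
  have h1j : 1 ≤ j := (Finset.mem_Icc.mp hj).1
  rw [← Finset.sum_filter_of_ne (p := fun m => m j ≠ 0)
      (fun m _ hne => by
        intro h0
        apply hne
        simp [h0])]
  rw [PS]
  refine Finset.sum_nbij' (fun m => Function.update m j (m j - 1))
    (fun m => Function.update m j (m j + 1)) ?_ ?_ ?_ ?_ ?_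
  · -- maps filtered PM n k into PM n (k - j)
    intro m hm
    obtain ⟨hmPM, hmj⟩ := Finset.mem_filter.mp hm
    obtain ⟨hsupp, hsum⟩ := mem_PM.mp hmPM
    have hmj1 : 1 ≤ m j := Nat.one_le_iff_ne_zero.mpr hmj
    rw [mem_PM]
    constructor
    · intro l hl
      simp only [Function.update_apply] at hl
      by_cases hlj : l = j
      · exact hlj ▸ hj
      · exact hsupp l (by simpa [hlj] using hl)
    · show ∑ l ∈ Finset.Icc 1 n, l * Function.update m j (m j - 1) l = k - j
      have hsplit : ∀ (v : ℕ), ∑ l ∈ Finset.Icc 1 n, l * Function.update m j v l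
          = (∑ l ∈ Finset.Icc 1 n \ {j}, l * m l) + j * v := by
        intro v
        rw [Finset.sum_eq_sum_sdiff_singleton_add hj]
        congr 1
        · refine Finset.sum_congr rfl fun l hl => ?_
          have hlj : l ≠ j := Finset.notMem_singleton.mp (Finset.mem_sdiff.mp hl).2
          simp [Function.update_apply, hlj]
        · simp
      have horig : (∑ l ∈ Finset.Icc 1 n \ {j}, l * m l) + j * m j = k := by
        rw [← Finset.sum_eq_sum_sdiff_singleton_add hj (fun l => l * m l)]
        exact hsum
      rw [hsplit]
      obtain ⟨v, hv⟩ : ∃ v, m j = v + 1 := ⟨m j - 1, by omega⟩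
      have h1 : j * (m j - 1) = j * v := by rw [hv]; simp
      have h2 : j * m j = j * v + j := by rw [hv, Nat.mul_succ]
      omega
  · -- maps PM n (k - j) into the filtered set
    intro m hm
    obtain ⟨hsupp, hsum⟩ := mem_PM.mp hm
    rw [Finset.mem_filter]
    constructor
    · rw [mem_PM]
      constructor
      · intro l hl
        simp only [Function.update_apply] at hl
        by_cases hlj : l = j
        · exact hlj ▸ hj
        · exact hsupp l (by simpa [hlj] using hl)
      · show ∑ l ∈ Finset.Icc 1 n, l * Function.update m j (m j + 1) l = k
        rw [Finset.sum_eq_sum_sdiff_singleton_add hj]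
        have horig : (∑ l ∈ Finset.Icc 1 n \ {j}, l * m l) + j * m j = k - j := by
          rw [← Finset.sum_eq_sum_sdiff_singleton_add hj (fun l => l * m l)]
          exact hsum
        have hcongr : ∑ l ∈ Finset.Icc 1 n \ {j}, l * Function.update m j (m j + 1) l
            = ∑ l ∈ Finset.Icc 1 n \ {j}, l * m l := by
          refine Finset.sum_congr rfl fun l hl => ?_
          have hlj : l ≠ j := Finset.notMem_singleton.mp (Finset.mem_sdiff.mp hl).2
          simp [Function.update_apply, hlj]
        rw [hcongr]
        simp only [Function.update_self]
        have h2 : j * (m j + 1) = j * m j + j := Nat.mul_succ j (m j)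
        omega
    · simp
  · intro m hm
    have hmj : m j ≠ 0 := (Finset.mem_filter.mp hm).2
    show Function.update (Function.update m j (m j - 1)) j (Function.update m j (m j - 1) j + 1) = m
    funext l
    by_cases hlj : l = j
    · subst hlj
      simp only [Function.update_self, Function.update_apply, if_pos rfl]
      omega
    · simp [Function.update_apply, hlj]
  · intro m hm
    show Function.update (Function.update m j (m j + 1)) j (Function.update m j (m j + 1) j - 1) = m
    funext l
    by_cases hlj : l = j
    · subst hlj
      simp [Function.update_apply]
    · simp [Function.update_apply, hlj]
  · -- value compatibility
    intro m hm
    obtain ⟨hmPM, hmj⟩ := Finset.mem_filter.mp hm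
    have hmj1 : 1 ≤ m j := Nat.one_le_iff_ne_zero.mpr hmj
    show ((j : ℝ) * (m j : ℝ)) * ∏ l ∈ Finset.Icc 1 n, pterm l (m l)
        = ∏ l ∈ Finset.Icc 1 n, pterm l (Function.update m j (m j - 1) l)
    rw [Finset.prod_eq_prod_diff_singleton_mul hj,
        Finset.prod_eq_prod_diff_singleton_mul hj (fun l => pterm l (Function.update m j (m j - 1) l))]
    have hcongr : ∏ l ∈ Finset.Icc 1 n \ {j}, pterm l (Function.update m j (m j - 1) l)
        = ∏ l ∈ Finset.Icc 1 n \ {j}, pterm l (m l) := by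
      refine Finset.prod_congr rfl fun l hl => ?_
      have hlj : l ≠ j := Finset.notMem_singleton.mp (Finset.mem_sdiff.mp hl).2
      simp [Function.update_apply, hlj]
    rw [hcongr, Function.update_self]
    have key : ((j : ℝ) * (m j : ℝ)) * pterm j (m j) = pterm j (m j - 1) := by
      obtain ⟨v, hv⟩ : ∃ v, m j = v + 1 := ⟨m j - 1, by omega⟩
      rw [hv]
      have := pterm_step h1j v
      simpa [Nat.cast_add, Nat.cast_one] using this
    calc ((j : ℝ) * (m j : ℝ)) * ((∏ l ∈ Finset.Icc 1 n \ {j}, pterm l (m l)) * pterm j (m j))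
        = (∏ l ∈ Finset.Icc 1 n \ {j}, pterm l (m l)) * (((j : ℝ) * (m j : ℝ)) * pterm j (m j)) := by ring
      _ = (∏ l ∈ Finset.Icc 1 n \ {j}, pterm l (m l)) * pterm j (m j - 1) := by rw [key]

/-- For `j > k`, every `m ∈ PM n k` has `m j = 0`, so the inner sum vanishes. -/
lemma inner_sum_zero {n k j : ℕ} (hj : j ∈ Finset.Icc 1 n) (hjk : k < j) :
    ∑ m ∈ PM n k, ((j : ℝ) * (m j : ℝ)) * ∏ l ∈ Finset.Icc 1 n, pterm l (m l) = 0 := by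
  refine Finset.sum_eq_zero fun m hm => ?_
  obtain ⟨hsupp, hsum⟩ := mem_PM.mp hm
  have hmj : m j = 0 := by
    by_contra h
    have hle : j * m j ≤ ∑ l ∈ Finset.Icc 1 n, l * m l :=
      Finset.single_le_sum (f := fun l => l * m l) (fun l _ => Nat.zero_le _) hj
    have : j ≤ j * m j := Nat.le_mul_of_pos_right _ (Nat.pos_of_ne_zero h)
    omega
  simp [hmj]

lemma PS_rec {n k : ℕ} (hk1 : 1 ≤ k) (hkn : k ≤ n) :
    (k : ℝ) * PS n k = ∑ j ∈ Finset.Icc 1 k, PS n (k - j) := by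
  have step1 : (k : ℝ) * PS n k
      = ∑ m ∈ PM n k, ∑ j ∈ Finset.Icc 1 n,
          ((j : ℝ) * (m j : ℝ)) * ∏ l ∈ Finset.Icc 1 n, pterm l (m l) := by
    rw [PS, Finset.mul_sum]
    refine Finset.sum_congr rfl fun m hm => ?_
    obtain ⟨_, hsum⟩ := mem_PM.mp hm
    rw [← Finset.sum_mul]
    congr 1
    rw [← hsum]
    push_cast
    rfl
  rw [step1, Finset.sum_comm]
  rw [← Finset.sum_subset (Finset.Icc_subset_Icc_right hkn)
      (fun j hj hjk => inner_sum_zero hj (by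
        simp only [Finset.mem_Icc] at hj hjk; omega))]
  refine Finset.sum_congr rfl fun j hj => ?_
  have hjk : j ≤ k := (Finset.mem_Icc.mp hj).2
  exact inner_sum_eq (Finset.mem_Icc.mpr ⟨(Finset.mem_Icc.mp hj).1, le_trans hjk hkn⟩) hjk

lemma PS_eq_one (n : ℕ) : ∀ k, k ≤ n → PS n k = 1 := by
  intro k
  induction k using Nat.strong_induction_on with
  | _ k ih =>
    intro hkn
    rcases Nat.eq_zero_or_pos k with rfl | hk
    · exact PS_zero n
    · have hrec := PS_rec hk hkn
      have hsum : ∑ j ∈ Finset.Icc 1 k, PS n (k - j) = (k : ℝ) := by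
        rw [Finset.sum_congr rfl (fun j hj => ih (k - j)
          (by simp only [Finset.mem_Icc] at hj; omega)
          (by omega))]
        simp [Nat.card_Icc]
      rw [hsum] at hrec
      have hk0 : (k : ℝ) ≠ 0 := Nat.cast_ne_zero.mpr (by omega)
      exact mul_left_cancel₀ hk0 (hrec.trans (mul_one _).symm)

theorem poisson_weighted_sum_prob
    {Ω : Type*} [MeasurableSpace Ω] (μ : Measure Ω) [IsProbabilityMeasure μ]
    (n : ℕ) (hn : 0 < n)
    (Z : ℕ → Ω → ℕ) (hmeas : ∀ j, Measurable (Z j))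
    (hindep : iIndepFun Z μ)
    (hpois : ∀ j ∈ Finset.Icc 1 n, ∀ m : ℕ,
      μ {ω | Z j ω = m}
        = ENNReal.ofReal (Real.exp (-(1 / (j : ℝ))) * (1 / (j : ℝ)) ^ m / m.factorial)) :
    (μ {ω | (∑ j ∈ Finset.Icc 1 n, j * Z j ω) = n}).toReal
      = Real.exp (-∑ j ∈ Finset.Icc 1 n, 1 / (j : ℝ)) := by
  classical
  set A : (ℕ → ℕ) → Set Ω := fun m => ⋂ j ∈ Finset.Icc 1 n, {ω | Z j ω = m j} with hA
  -- event decomposition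
  have hevent : {ω | (∑ j ∈ Finset.Icc 1 n, j * Z j ω) = n} = ⋃ m ∈ PM n n, A m := by
    ext ω
    simp only [Set.mem_setOf_eq, Set.mem_iUnion, hA, Set.mem_iInter]
    constructor
    · intro h
      refine ⟨fun j => if j ∈ Finset.Icc 1 n then Z j ω else 0, ?_, ?_⟩
      · rw [mem_PM]
        constructor
        · intro j hj
          by_contra hjn
          rw [if_neg hjn] at hj
          exact hj rfl
        · exact (Finset.sum_congr rfl fun j hj => by simp [hj]).trans h
      · intro j hj
        simp [hj]
    · rintro ⟨m, hm, hω⟩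
      obtain ⟨_, hsum⟩ := mem_PM.mp hm
      exact (Finset.sum_congr rfl fun j hj => by rw [hω j hj]).trans hsum
  -- measurability
  have hAmeas : ∀ m : ℕ → ℕ, MeasurableSet (A m) := fun m =>
    MeasurableSet.biInter (Finset.Icc 1 n).countable_toSet
      (fun j _ => (hmeas j) (measurableSet_singleton (m j)))
  -- pairwise disjointness
  have hdisj : Set.PairwiseDisjoint (↑(PM n n) : Set (ℕ → ℕ)) A := by
    intro m hm m' hm' hne
    simp only [Finset.coe_sort_coe, Finset.mem_coe] at hm hm'
    obtain ⟨hsupp, _⟩ := mem_PM.mp hm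
    obtain ⟨hsupp', _⟩ := mem_PM.mp hm'
    obtain ⟨j, hj⟩ : ∃ j, m j ≠ m' j := by
      by_contra h
      push_neg at h
      exact hne (funext h)
    have hjIcc : j ∈ Finset.Icc 1 n := by
      rcases Nat.eq_zero_or_pos (m j) with h0 | h0
      · exact hsupp' j (by omega)
      · exact hsupp j (by omega)
    simp only [Function.onFun]
    rw [Set.disjoint_left]
    intro ω hω hω'
    simp only [hA, Set.mem_iInter, Set.mem_setOf_eq] at hω hω'
    exact hj ((hω j hjIcc).symm.trans (hω' j hjIcc))
  -- measure of each piece via independence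
  have hpiece : ∀ m ∈ PM n n, μ (A m)
      = ENNReal.ofReal (∏ j ∈ Finset.Icc 1 n,
          (Real.exp (-(1 / (j : ℝ))) * ((1 / (j : ℝ)) ^ (m j) / (m j).factorial))) := by
    intro m hm
    have hfac : μ (A m) = ∏ j ∈ Finset.Icc 1 n, μ {ω | Z j ω = m j} := by
      refine hindep.meas_biInter (fun j _ => ⟨{m j}, measurableSet_singleton _, rfl⟩)
    rw [hfac]
    rw [Finset.prod_congr rfl (fun j hj => hpois j hj (m j))]
    rw [← ENNReal.ofReal_prod_of_nonneg]
    · congr 1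
      refine Finset.prod_congr rfl fun j hj => ?_
      ring
    · intro j hj
      positivity
  -- put it together
  rw [hevent, measure_biUnion_finset hdisj (fun m _ => hAmeas m)]
  rw [Finset.sum_congr rfl hpiece]
  rw [← ENNReal.ofReal_sum_of_nonneg (fun m _ => Finset.prod_nonneg fun j _ => by positivity)]
  rw [ENNReal.toReal_ofReal (Finset.sum_nonneg fun m _ =>
    Finset.prod_nonneg fun j _ => by positivity)]
  have hfactor : ∀ m : ℕ → ℕ, ∏ j ∈ Finset.Icc 1 n,
      (Real.exp (-(1 / (j : ℝ))) * ((1 / (j : ℝ)) ^ (m j) / (m j).factorial))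
      = (∏ j ∈ Finset.Icc 1 n, Real.exp (-(1 / (j : ℝ)))) * ∏ j ∈ Finset.Icc 1 n, pterm j (m j) := by
    intro m
    rw [← Finset.prod_mul_distrib]
    exact Finset.prod_congr rfl fun j hj => by rw [pterm]
  rw [Finset.sum_congr rfl (fun m _ => hfactor m), ← Finset.mul_sum]
  have hPS : ∑ m ∈ PM n n, ∏ j ∈ Finset.Icc 1 n, pterm j (m j) = 1 := PS_eq_one n n le_rfl
  rw [hPS, mul_one, ← Real.exp_sum]
  congr 1
  rw [← Finset.sum_neg_distrib]
end
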